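/- Theorem (square MIMO): let 𝕜 be a field, m ≥ 1, and let A be n×n, B be n×m, C be m×n over 𝕜. Suppose each output i (0 ≤ i ≤ m−1) has relative degree ρ_i ≥ 1, meaning (row i of C) * A^j * B = 0 (1×m) for all 0 ≤ j ≤ ρ_i − 2, and the m×m decoupling matrix β whose i-th row is (row i of C) * A^(ρ_i − 1) * B is invertible. Set ρ = ρ_0 + ⋯ + ρ_{m−1} (assume ρ ≤ n) and l_z = n − ρ; let C̄ be the ρ×n matrix obtained by stacking, for each i, the rows (row i of C) * A^j for 0 ≤ j ≤ ρ_i − 1; fix B_z : Matrix (Fin l_z) (Fin n) 𝕜 with B_z * B = 0 such that T = [B_z; C̄] (n×n) is invertible, let S_η be the first l_z columns of T⁻¹, and A_η = B_z * A * S_η. Then for every λ ∈ 𝕜, the (n+m)×(n+m) Rosenbrock matrix [[λ·I − A, B], [C, 0]] has rank strictly less than n+m if and only if det(λ·I_{l_z} − A_η) = 0; i.e., the invariant zeros of the square MIMO system (A,B,C) with D = 0 are exactly the eigenvalues of A_η. -/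

import Mathlib

open Matrix

lemma stmt16_rank_lt_iff {𝕜 : Type*} [Field 𝕜] {ι : Type*} [Fintype ι] [DecidableEq ι]
    (M : Matrix ι ι 𝕜) : M.rank < Fintype.card ι ↔ M.det = 0 := by
  constructor
  · intro h
    by_contra hd
    rw [Matrix.rank_of_isUnit M ((Matrix.isUnit_iff_isUnit_det M).2
      (isUnit_iff_ne_zero.2 hd))] at h
    exact lt_irrefl _ h
  · intro hd
    obtain ⟨v, hv, hMv⟩ := Matrix.exists_mulVec_eq_zero_iff.2 hd
    have hne : LinearMap.range M.mulVecLin ≠ ⊤ := by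
      intro htop
      have hsurj : Function.Surjective M.mulVecLin := LinearMap.range_eq_top.1 htop
      have hinj : Function.Injective M.mulVecLin :=
        (LinearMap.injective_iff_surjective).2 hsurj
      exact hv (hinj (by simpa using hMv))
    have hlt := Submodule.finrank_lt hne
    simpa [Matrix.rank, Module.finrank_pi] using hlt


/-- **square MIMO.** Suppose each output `i` of the square MIMO system
`(A, B, C)` (with `D = 0`) has relative degree `ρ i ≥ 1`: row `i` of `C * A ^ j * B`
vanishes for `j ≤ ρ i - 2`, and the decoupling matrix `β` with rows `Cᵢ * A ^ (ρ i - 1) * B`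
is invertible.  With `ρ = ∑ ρ i ≤ n`, `l_z = n - ρ`, `C̄` stacking the rows `Cᵢ * A ^ j`
(`0 ≤ j ≤ ρ i - 1`), `B_z` with `B_z * B = 0` such that `T = [B_z; C̄]` is invertible,
`S_η` the columns of `T⁻¹` matching `B_z`, and `A_η = B_z * A * S_η`: for every `λ`, the
Rosenbrock matrix `[[λ I - A, B], [C, 0]]` has rank `< n + m` iff `det(λ I - A_η) = 0`,
i.e., the invariant zeros of the system are exactly the eigenvalues of `A_η`. -/
theorem stmt16 {𝕜 : Type*} [Field 𝕜] {n m : ℕ} (hm : 1 ≤ m)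
    (A : Matrix (Fin n) (Fin n) 𝕜) (B : Matrix (Fin n) (Fin m) 𝕜)
    (C : Matrix (Fin m) (Fin n) 𝕜)
    (ρf : Fin m → ℕ) (hρf : ∀ i, 1 ≤ ρf i)
    (hrd : ∀ (i : Fin m) (j : ℕ), j + 2 ≤ ρf i → C i ᵥ* (A ^ j * B) = 0)
    (β : Matrix (Fin m) (Fin m) 𝕜)
    (hβ : ∀ i : Fin m, β i = C i ᵥ* (A ^ (ρf i - 1) * B))
    (hβinv : IsUnit β.det)
    (hρn : ∑ i, ρf i ≤ n)
    (Cbar : Matrix ((i : Fin m) × Fin (ρf i)) (Fin n) 𝕜)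
    (hCbar : ∀ p : (i : Fin m) × Fin (ρf i), Cbar p = C p.1 ᵥ* A ^ (p.2 : ℕ))
    (Bz : Matrix (Fin (n - ∑ i, ρf i)) (Fin n) 𝕜) (hBz : Bz * B = 0)
    (e : (Fin (n - ∑ i, ρf i) ⊕ ((i : Fin m) × Fin (ρf i))) ≃ Fin n)
    (T : Matrix (Fin n) (Fin n) 𝕜)
    (hT : T = (Matrix.fromRows Bz Cbar).submatrix e.symm id)
    (hTinv : IsUnit T.det)
    (Seta : Matrix (Fin n) (Fin (n - ∑ i, ρf i)) 𝕜)
    (hSeta : ∀ (i : Fin n) (k : Fin (n - ∑ i, ρf i)), Seta i k = T⁻¹ i (e (Sum.inl k)))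
    (Aeta : Matrix (Fin (n - ∑ i, ρf i)) (Fin (n - ∑ i, ρf i)) 𝕜)
    (hAeta : Aeta = Bz * A * Seta) :
    ∀ lam : 𝕜,
      (Matrix.fromBlocks (lam • (1 : Matrix (Fin n) (Fin n) 𝕜) - A) B C
        (0 : Matrix (Fin m) (Fin m) 𝕜)).rank < n + m ↔
      (lam • (1 : Matrix (Fin (n - ∑ i, ρf i)) (Fin (n - ∑ i, ρf i)) 𝕜) - Aeta).det = 0 := by
  intro lam
  have hcard : Fintype.card (Fin n ⊕ Fin m) = n + m := by simp
  rw [← hcard, stmt16_rank_lt_iff, ← Matrix.exists_mulVec_eq_zero_iff,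
    ← Matrix.exists_mulVec_eq_zero_iff]
  -- basic structural facts
  have hTrow : ∀ (s : Fin (n - ∑ i, ρf i) ⊕ ((i : Fin m) × Fin (ρf i))) (j : Fin n),
      T (e s) j = (Matrix.fromRows Bz Cbar) s j := by
    intro s j
    rw [hT]
    simp [Matrix.submatrix_apply]
  have hTTinv : T * T⁻¹ = 1 := Matrix.mul_nonsing_inv T hTinv
  have hTinvT : T⁻¹ * T = 1 := Matrix.nonsing_inv_mul T hTinv
  have hBzS : Bz * Seta = 1 := by
    ext k k'
    have h := congrFun (congrFun hTTinv (e (Sum.inl k))) (e (Sum.inl k'))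
    rw [Matrix.mul_apply] at h
    have hL : ∑ j, T (e (Sum.inl k)) j * T⁻¹ j (e (Sum.inl k'))
        = (Bz * Seta) k k' := by
      rw [Matrix.mul_apply]
      refine Finset.sum_congr rfl fun j _ => ?_
      rw [hTrow, hSeta, Matrix.fromRows_apply_inl]
    rw [hL] at h
    rw [h]
    simp [Matrix.one_apply, e.injective.eq_iff]
  have hCbarS : Cbar * Seta = 0 := by
    ext p k'
    have h := congrFun (congrFun hTTinv (e (Sum.inr p))) (e (Sum.inl k'))
    rw [Matrix.mul_apply] at h
    have hL : ∑ j, T (e (Sum.inr p)) j * T⁻¹ j (e (Sum.inl k'))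
        = (Cbar * Seta) p k' := by
      rw [Matrix.mul_apply]
      refine Finset.sum_congr rfl fun j _ => ?_
      rw [hTrow, hSeta, Matrix.fromRows_apply_inr]
    rw [hL] at h
    rw [h]
    simp [Matrix.one_apply, e.injective.eq_iff]
  -- reconstruction of x from (η, ξ = 0)
  have hTmul : ∀ (x : Fin n → 𝕜) (s : Fin (n - ∑ i, ρf i) ⊕ ((i : Fin m) × Fin (ρf i))),
      (T *ᵥ x) (e s) = ((Matrix.fromRows Bz Cbar) *ᵥ x) s := by
    intro x s
    simp only [Matrix.mulVec, dotProduct]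
    exact Finset.sum_congr rfl fun j _ => by simp only [hTrow]
  have hx_eq : ∀ (x : Fin n → 𝕜) (η : Fin (n - ∑ i, ρf i) → 𝕜),
      Bz *ᵥ x = η → Cbar *ᵥ x = 0 → x = Seta *ᵥ η := by
    intro x η h1 h2
    have hTx : T *ᵥ x = T *ᵥ (Seta *ᵥ η) := by
      funext r
      have hr : r = e (e.symm r) := (e.apply_symm_apply r).symm
      rw [hr, hTmul, hTmul]
      cases hs : e.symm r with
      | inl k =>
          have hA : ((Matrix.fromRows Bz Cbar) *ᵥ x) (Sum.inl k) = (Bz *ᵥ x) k := rfl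
          have hB : ((Matrix.fromRows Bz Cbar) *ᵥ (Seta *ᵥ η)) (Sum.inl k)
              = (Bz *ᵥ (Seta *ᵥ η)) k := rfl
          rw [hA, hB, h1, Matrix.mulVec_mulVec, hBzS, Matrix.one_mulVec]
      | inr p =>
          have hA : ((Matrix.fromRows Bz Cbar) *ᵥ x) (Sum.inr p) = (Cbar *ᵥ x) p := rfl
          have hB : ((Matrix.fromRows Bz Cbar) *ᵥ (Seta *ᵥ η)) (Sum.inr p)
              = (Cbar *ᵥ (Seta *ᵥ η)) p := rfl
          rw [hA, hB, h2, Matrix.mulVec_mulVec, hCbarS, Matrix.zero_mulVec]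
    have hc : T⁻¹ *ᵥ (T *ᵥ x) = T⁻¹ *ᵥ (T *ᵥ (Seta *ᵥ η)) := by rw [hTx]
    rwa [Matrix.mulVec_mulVec, Matrix.mulVec_mulVec, hTinvT, Matrix.one_mulVec,
      Matrix.one_mulVec] at hc
  have hzero : ∀ y : Fin n → 𝕜, Bz *ᵥ y = 0 → Cbar *ᵥ y = 0 → y = 0 := by
    intro y h1 h2
    have := hx_eq y 0 h1 h2
    simpa [Matrix.mulVec_zero] using this
  -- dot product helper
  have hdot : ∀ (w x : Fin n → 𝕜) (u : Fin m → 𝕜),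
      w ⬝ᵥ ((lam • (1 : Matrix (Fin n) (Fin n) 𝕜) - A) *ᵥ x + B *ᵥ u)
        = lam * (w ⬝ᵥ x) - (w ᵥ* A) ⬝ᵥ x + (w ᵥ* B) ⬝ᵥ u := by
    intro w x u
    rw [Matrix.sub_mulVec, Matrix.smul_mulVec, Matrix.one_mulVec, dotProduct_add,
      dotProduct_sub, dotProduct_smul, smul_eq_mul, dotProduct_mulVec, dotProduct_mulVec]
  -- chain vanishing
  have hxi : ∀ (x : Fin n → 𝕜) (u : Fin m → 𝕜),
      (lam • (1 : Matrix (Fin n) (Fin n) 𝕜) - A) *ᵥ x + B *ᵥ u = 0 →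
      C *ᵥ x = 0 →
      ∀ (i : Fin m) (j : ℕ), j < ρf i → (C i ᵥ* A ^ j) ⬝ᵥ x = 0 := by
    intro x u hxu hCx i j
    induction j with
    | zero =>
        intro _
        have h := congrFun hCx i
        have h' : (C *ᵥ x) i = C i ⬝ᵥ x := rfl
        rw [h'] at h
        rw [pow_zero, Matrix.vecMul_one]
        exact h
    | succ j ih =>
        intro hj
        have hj' : j < ρf i := Nat.lt_of_succ_lt hj
        have h0 : (C i ᵥ* A ^ j) ⬝ᵥ
            ((lam • (1 : Matrix (Fin n) (Fin n) 𝕜) - A) *ᵥ x + B *ᵥ u) = 0 := by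
          rw [hxu, dotProduct_zero]
        rw [hdot] at h0
        have hB0 : (C i ᵥ* A ^ j) ᵥ* B = 0 := by
          rw [Matrix.vecMul_vecMul]
          exact hrd i j hj
        have hA1 : (C i ᵥ* A ^ j) ᵥ* A = C i ᵥ* A ^ (j + 1) := by
          rw [Matrix.vecMul_vecMul, ← pow_succ]
        rw [hA1, hB0, zero_dotProduct, ih hj', mul_zero, add_zero, zero_sub,
          neg_eq_zero] at h0
        exact h0
  constructor
  · -- forward
    rintro ⟨v, hv, hMv⟩
    set x : Fin n → 𝕜 := fun r => v (Sum.inl r) with hxdef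
    set u : Fin m → 𝕜 := fun r => v (Sum.inr r) with hudef
    have hv' : v = Sum.elim x u := by funext r; cases r <;> rfl
    rw [hv', Matrix.fromBlocks_mulVec] at hMv
    have h1 : (lam • (1 : Matrix (Fin n) (Fin n) 𝕜) - A) *ᵥ x + B *ᵥ u = 0 := by
      funext r; exact congrFun hMv (Sum.inl r)
    have h2 : C *ᵥ x = 0 := by
      funext r
      have := congrFun hMv (Sum.inr r)
      simpa [Matrix.zero_mulVec] using this
    have hξ := hxi x u h1 h2
    have hCbarx : Cbar *ᵥ x = 0 := by
      funext p
      have hp : (Cbar *ᵥ x) p = Cbar p ⬝ᵥ x := rfl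
      rw [hp, hCbar p]
      exact hξ p.1 p.2 p.2.isLt
    have hxS : x = Seta *ᵥ (Bz *ᵥ x) := hx_eq x (Bz *ᵥ x) rfl hCbarx
    have hηeq : (lam • (1 : Matrix (Fin (n - ∑ i, ρf i)) (Fin (n - ∑ i, ρf i)) 𝕜) - Aeta)
        *ᵥ (Bz *ᵥ x) = 0 := by
      have hb : Bz *ᵥ ((lam • (1 : Matrix (Fin n) (Fin n) 𝕜) - A) *ᵥ x + B *ᵥ u) = 0 := by
        rw [h1, Matrix.mulVec_zero]
      rw [Matrix.mulVec_add, Matrix.mulVec_mulVec, Matrix.mulVec_mulVec,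
        Matrix.mul_sub, Matrix.mul_smul, Matrix.mul_one, hBz, Matrix.zero_mulVec,
        add_zero, Matrix.sub_mulVec, Matrix.smul_mulVec] at hb
      have hAx : Aeta *ᵥ (Bz *ᵥ x) = (Bz * A) *ᵥ x := by
        rw [hAeta, ← Matrix.mulVec_mulVec, ← hxS]
      rw [Matrix.sub_mulVec, Matrix.smul_mulVec, Matrix.one_mulVec, hAx]
      exact hb
    refine ⟨Bz *ᵥ x, ?_, hηeq⟩
    intro hη0
    apply hv
    have hx0 : x = 0 := by rw [hxS, hη0, Matrix.mulVec_zero]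
    have hBu : B *ᵥ u = 0 := by
      have h := h1
      rw [hx0, Matrix.mulVec_zero, zero_add] at h
      exact h
    have hβu : β *ᵥ u = 0 := by
      funext i
      have h1' : (β *ᵥ u) i = β i ⬝ᵥ u := rfl
      rw [h1', hβ i, ← Matrix.vecMul_vecMul, ← dotProduct_mulVec, hBu, dotProduct_zero]
      rfl
    have hu0 : u = 0 := by
      have h : β⁻¹ *ᵥ (β *ᵥ u) = u := by
        rw [Matrix.mulVec_mulVec, Matrix.nonsing_inv_mul β hβinv, Matrix.one_mulVec]
      rw [← h, hβu, Matrix.mulVec_zero]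
    rw [hv', hx0, hu0]
    funext r
    cases r <;> rfl
  · -- backward
    rintro ⟨η, hη, hηeq⟩
    obtain ⟨x, hxdef⟩ : ∃ x : Fin n → 𝕜, x = Seta *ᵥ η := ⟨_, rfl⟩
    obtain ⟨w, hwdef⟩ : ∃ w : Fin m → 𝕜, w = fun i => (C i ᵥ* A ^ (ρf i)) ⬝ᵥ x := ⟨_, rfl⟩
    obtain ⟨u, hudef⟩ : ∃ u : Fin m → 𝕜, u = β⁻¹ *ᵥ w := ⟨_, rfl⟩
    have hBzx : Bz *ᵥ x = η := by
      rw [hxdef, Matrix.mulVec_mulVec, hBzS, Matrix.one_mulVec]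
    have hCbarx : Cbar *ᵥ x = 0 := by
      rw [hxdef, Matrix.mulVec_mulVec, hCbarS, Matrix.zero_mulVec]
    have hξ : ∀ (i : Fin m) (j : ℕ), j < ρf i → (C i ᵥ* A ^ j) ⬝ᵥ x = 0 := by
      intro i j hj
      have h := congrFun hCbarx ⟨i, ⟨j, hj⟩⟩
      have h' : (Cbar *ᵥ x) ⟨i, ⟨j, hj⟩⟩ = Cbar ⟨i, ⟨j, hj⟩⟩ ⬝ᵥ x := rfl
      rw [h', hCbar ⟨i, ⟨j, hj⟩⟩] at h
      exact h
    have hβu : β *ᵥ u = w := by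
      rw [hudef, Matrix.mulVec_mulVec, Matrix.mul_nonsing_inv β hβinv, Matrix.one_mulVec]
    have hy : (lam • (1 : Matrix (Fin n) (Fin n) 𝕜) - A) *ᵥ x + B *ᵥ u = 0 := by
      apply hzero
      · rw [Matrix.mulVec_add, Matrix.mulVec_mulVec, Matrix.mulVec_mulVec,
          Matrix.mul_sub, Matrix.mul_smul, Matrix.mul_one, hBz, Matrix.zero_mulVec,
          add_zero, Matrix.sub_mulVec, Matrix.smul_mulVec, hBzx]
        have hAx : (Bz * A) *ᵥ x = Aeta *ᵥ η := by
          rw [hxdef, Matrix.mulVec_mulVec, ← hAeta]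
        rw [hAx]
        have h := hηeq
        rwa [Matrix.sub_mulVec, Matrix.smul_mulVec, Matrix.one_mulVec] at h
      · funext p
        simp only [Pi.zero_apply]
        obtain ⟨i, j⟩ := p
        have hp : (Cbar *ᵥ ((lam • (1 : Matrix (Fin n) (Fin n) 𝕜) - A) *ᵥ x + B *ᵥ u))
            ⟨i, j⟩
            = Cbar ⟨i, j⟩ ⬝ᵥ ((lam • (1 : Matrix (Fin n) (Fin n) 𝕜) - A) *ᵥ x + B *ᵥ u) :=
          rfl
        rw [hp, hCbar ⟨i, j⟩, hdot, hξ i j j.isLt, mul_zero]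
        rcases lt_or_eq_of_le (Nat.succ_le_of_lt j.isLt) with hlt | heq
        · rw [Matrix.vecMul_vecMul, ← pow_succ, hξ i ((j : ℕ) + 1) hlt,
            Matrix.vecMul_vecMul, hrd i (j : ℕ) hlt, zero_dotProduct]
          ring
        · have hjj : (j : ℕ) = ρf i - 1 := by omega
          have heq' : (j : ℕ) + 1 = ρf i := heq
          rw [Matrix.vecMul_vecMul, ← pow_succ, heq', Matrix.vecMul_vecMul, hjj, ← hβ i]
          have hwi : (C i ᵥ* A ^ (ρf i)) ⬝ᵥ x = w i := by rw [hwdef]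
          have hβui : β i ⬝ᵥ u = w i := congrFun hβu i
          rw [hwi, hβui]
          ring
    have hC2 : C *ᵥ x = 0 := by
      funext i
      have h' : (C *ᵥ x) i = C i ⬝ᵥ x := rfl
      have h'' : C i ⬝ᵥ x = (C i ᵥ* A ^ 0) ⬝ᵥ x := by rw [pow_zero, Matrix.vecMul_one]
      rw [h', h'', hξ i 0 (hρf i)]
      rfl
    refine ⟨Sum.elim x u, ?_, ?_⟩
    · intro h0
      apply hη
      have hx0 : x = 0 := by funext r; exact congrFun h0 (Sum.inl r)
      rw [← hBzx, hx0, Matrix.mulVec_zero]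
    · rw [Matrix.fromBlocks_mulVec]
      funext r
      cases r with
      | inl r => exact congrFun hy r
      | inr r => simpa [Matrix.zero_mulVec] using congrFun hC2 r
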